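/- arXiv:1708.09104 — 2 statements merged into one kernel-verified Lean document; each statement's English description precedes it below -/
import Mathlib

section
/- Let n = 1. The map (σ,w,Σ,W) ↦ (a,b,A,B) defined for σ > 0 by a = σ·cos w, b = σ·sin w, A = Σ·cos w − (W/σ)·sin w, B = Σ·sin w + (W/σ)·cos w (positions (σ,w) ↦ (a,b), momenta (Σ,W) ↦ (A,B)) is symplectic, and it transforms the rescaled thermostated Hamiltonian into a mechanical Hamiltonian with rotationally invariant logarithmic potential: W²/(2σ²) + Σ²/2 + ln σ = (A² + B²)/2 + (1/2)·ln(a² + b²). -/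
/-!
STATEMENT 2 (Lemma `rot-inv`, n = 1): the polar-coordinates map
`(σ,w,Σ,W) ↦ (a,b,A,B)` with `a = σ cos w`, `b = σ sin w`,
`A = Σ cos w − (W/σ) sin w`, `B = Σ sin w + (W/σ) cos w` is symplectic
(positions `(σ,w) ↦ (a,b)`, momenta `(Σ,W) ↦ (A,B)`), and it transforms the
rescaled thermostated Hamiltonian into a mechanical Hamiltonian with rotationally
invariant logarithmic potential.

Phase-space points are written `((σ,w),(Σ,W))`: positions first, then momenta.
-/

noncomputable section

/-- Phase space of a 2-degree-of-freedom system: positions in `ℝ × ℝ`, momenta in `ℝ × ℝ`. -/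
abbrev Phase2 := (ℝ × ℝ) × (ℝ × ℝ)

/-- Euclidean pairing of a momentum covector with a position vector. -/
def pair2 (P Q : ℝ × ℝ) : ℝ := P.1 * Q.1 + P.2 * Q.2

/-- The canonical symplectic 2-form (sum over i of d(momentumᵢ) ∧ d(positionᵢ)). -/
def canonForm2 (x y : Phase2) : ℝ := pair2 x.2 y.1 - pair2 y.2 x.1

/-- A map of phase space is symplectic on a set `s` if it is differentiable at each point
of `s` and its Jacobian there preserves the canonical 2-form. -/
def IsSymplecticOn2 (f : Phase2 → Phase2) (s : Set Phase2) : Prop :=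
  ∀ x ∈ s, DifferentiableAt ℝ f x ∧
    ∀ v w : Phase2, canonForm2 (fderiv ℝ f x v) (fderiv ℝ f x w) = canonForm2 v w

/-- The polar-to-cartesian map `(σ,w,Σ,W) ↦ (a,b,A,B)`; the argument is `((σ,w),(Σ,W))`. -/
def polarMap (x : Phase2) : Phase2 :=
  ((x.1.1 * Real.cos x.1.2, x.1.1 * Real.sin x.1.2),
   (x.2.1 * Real.cos x.1.2 - (x.2.2 / x.1.1) * Real.sin x.1.2,
    x.2.1 * Real.sin x.1.2 + (x.2.2 / x.1.1) * Real.cos x.1.2))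

theorem polar_map_symplectic_and_log_potential :
    IsSymplecticOn2 polarMap {x : Phase2 | 0 < x.1.1} ∧
    ∀ (σ w Sg W : ℝ), 0 < σ →
      W ^ 2 / (2 * σ ^ 2) + Sg ^ 2 / 2 + Real.log σ =
        ((polarMap ((σ, w), (Sg, W))).2.1 ^ 2 + (polarMap ((σ, w), (Sg, W))).2.2 ^ 2) / 2
          + (1 / 2) * Real.log
              ((polarMap ((σ, w), (Sg, W))).1.1 ^ 2 + (polarMap ((σ, w), (Sg, W))).1.2 ^ 2) := by
  constructor
  · rintro ⟨⟨σ, w⟩, Sg, Wm⟩ hx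
    simp only [Set.mem_setOf_eq] at hx
    have hσ : σ ≠ 0 := ne_of_gt hx
    set x : Phase2 := ((σ,w),(Sg,Wm)) with hxdef
    have hsig : HasFDerivAt (fun x : Phase2 => x.1.1)
        ((ContinuousLinearMap.fst ℝ ℝ ℝ).comp (ContinuousLinearMap.fst ℝ (ℝ×ℝ) (ℝ×ℝ))) x :=
      (hasFDerivAt_fst).comp x hasFDerivAt_fst
    have hw : HasFDerivAt (fun x : Phase2 => x.1.2)
        ((ContinuousLinearMap.snd ℝ ℝ ℝ).comp (ContinuousLinearMap.fst ℝ (ℝ×ℝ) (ℝ×ℝ))) x :=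
      (hasFDerivAt_snd).comp x hasFDerivAt_fst
    have hS : HasFDerivAt (fun x : Phase2 => x.2.1)
        ((ContinuousLinearMap.fst ℝ ℝ ℝ).comp (ContinuousLinearMap.snd ℝ (ℝ×ℝ) (ℝ×ℝ))) x :=
      (hasFDerivAt_fst).comp x hasFDerivAt_snd
    have hWm : HasFDerivAt (fun x : Phase2 => x.2.2)
        ((ContinuousLinearMap.snd ℝ ℝ ℝ).comp (ContinuousLinearMap.snd ℝ (ℝ×ℝ) (ℝ×ℝ))) x :=
      (hasFDerivAt_snd).comp x hasFDerivAt_snd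
    have hcos := (Real.hasDerivAt_cos w).comp_hasFDerivAt x hw
    have hsin := (Real.hasDerivAt_sin w).comp_hasFDerivAt x hw
    have hinv := (hasDerivAt_inv hσ).comp_hasFDerivAt x hsig
    have h1 := hsig.mul hcos
    have h2 := hsig.mul hsin
    have hq := hWm.mul hinv
    have h3 := (hS.mul hcos).sub (hq.mul hsin)
    have h4 := (hS.mul hsin).add (hq.mul hcos)
    have hh := (h1.prodMk h2).prodMk (h3.prodMk h4)
    have heq : polarMap = fun y : Phase2 =>
        ((y.1.1 * Real.cos y.1.2, y.1.1 * Real.sin y.1.2),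
         (y.2.1 * Real.cos y.1.2 - (y.2.2 * (y.1.1)⁻¹) * Real.sin y.1.2,
          y.2.1 * Real.sin y.1.2 + (y.2.2 * (y.1.1)⁻¹) * Real.cos y.1.2)) := by
      funext y; simp [polarMap, div_eq_mul_inv]
    rw [heq]
    simp only [Function.comp_def, Pi.mul_apply, Pi.sub_apply, Pi.add_apply] at hh
    refine ⟨hh.differentiableAt, fun v u => ?_⟩
    rw [hh.fderiv]
    simp only [canonForm2, pair2, ContinuousLinearMap.prod_apply, ContinuousLinearMap.add_apply,
      ContinuousLinearMap.coe_smul', Pi.smul_apply, ContinuousLinearMap.coe_comp',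
      Function.comp_apply, ContinuousLinearMap.coe_fst', ContinuousLinearMap.coe_snd',
      smul_eq_mul, ContinuousLinearMap.coe_sub']
    simp only [Pi.sub_apply, ContinuousLinearMap.add_apply, ContinuousLinearMap.coe_smul',
      Pi.smul_apply, Function.comp_apply, smul_eq_mul]
    have hcs : Real.cos w ^ 2 + Real.sin w ^ 2 = 1 := Real.cos_sq_add_sin_sq w
    simp only [ContinuousLinearMap.comp_apply, ContinuousLinearMap.coe_fst', ContinuousLinearMap.coe_snd', hxdef]
    field_simp
    linear_combination (σ^2 * (v.2.1*u.1.1 - v.1.2*u.2.2 - v.1.1*u.2.1 + v.2.2*u.1.2)) * hcs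
  · intro σ w Sg W hσ
    have hσ' : σ ≠ 0 := ne_of_gt hσ
    have hcs : Real.cos w ^ 2 + Real.sin w ^ 2 = 1 := Real.cos_sq_add_sin_sq w
    have hab : (polarMap ((σ, w), (Sg, W))).1.1 ^ 2 + (polarMap ((σ, w), (Sg, W))).1.2 ^ 2
        = σ ^ 2 := by
      simp only [polarMap]
      linear_combination σ^2 * hcs
    have hAB : (polarMap ((σ, w), (Sg, W))).2.1 ^ 2 + (polarMap ((σ, w), (Sg, W))).2.2 ^ 2
        = Sg ^ 2 + W ^ 2 / σ ^ 2 := by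
      simp only [polarMap]
      field_simp
      linear_combination (Sg^2 * σ^2 + W^2) * hcs
    rw [hab, hAB, Real.log_pow]
    push_cast
    field_simp
    ring

end
end

section
/- Let C ∈ ℝⁿ with |C| = 1. Define the map f on {(u,v,U,V) ∈ ℝ × ℝⁿ × ℝ × ℝⁿ : u < 1, V ≠ C} by f(u,v,U,V) = (σ,w,Σ,W) with σ = (1−u)·|C−V|, w = −v − U(1−u)(C−V)/|C−V|², Σ = −U/|C−V|, W = C−V (positions (u,v) ↦ (σ,w), momenta (U,V) ↦ (Σ,W)). Then f is symplectic, and F₀(f(u,v,U,V)) = (1/2)(1−u)^{−2} + U²/(2|C−V|²) + ln(1−u) + ln|C−V| for all points of the domain. -/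
/-!
STATEMENT 3: the symplectic change of variables `f(u,v,U,V) = (σ,w,Σ,W)` given by
`σ = (1−u)|C−V|`, `w = −v − U(1−u)(C−V)/|C−V|²`, `Σ = −U/|C−V|`, `W = C−V`
(positions `(u,v) ↦ (σ,w)`, momenta `(U,V) ↦ (Σ,W)`), defined for `u < 1`, `V ≠ C`,
transforms the rescaled Nosé-thermostated free-particle Hamiltonian
`F₀(σ,w,Σ,W) = |W|²/(2σ²) + Σ²/2 + ln σ` into
`(1/2)(1−u)⁻² + U²/(2|C−V|²) + ln(1−u) + ln|C−V|`.

Phase-space points are written `((u,v),(U,V))`: positions first, then momenta.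
-/

noncomputable section

/-- Phase space: positions `(u,v) ∈ ℝ × ℝⁿ`, momenta `(U,V) ∈ ℝ × ℝⁿ`. -/
abbrev Phase (n : ℕ) := (ℝ × (Fin n → ℝ)) × (ℝ × (Fin n → ℝ))

/-- Euclidean norm on `ℝⁿ`. -/
def enorm₂ {n : ℕ} (x : Fin n → ℝ) : ℝ := Real.sqrt (∑ i, x i ^ 2)

/-- Euclidean pairing of a momentum covector with a position vector. -/
def pairP {n : ℕ} (P Q : ℝ × (Fin n → ℝ)) : ℝ := P.1 * Q.1 + ∑ i, P.2 i * Q.2 i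

/-- The canonical symplectic 2-form (sum over i of d(momentumᵢ) ∧ d(positionᵢ)). -/
def canonFormP {n : ℕ} (x y : Phase n) : ℝ := pairP x.2 y.1 - pairP y.2 x.1

/-- A map of phase space is symplectic on a set `s` if it is differentiable at each point
of `s` and its Jacobian there preserves the canonical 2-form. -/
def IsSymplecticOnP {n : ℕ} (f : Phase n → Phase n) (s : Set (Phase n)) : Prop :=
  ∀ x ∈ s, DifferentiableAt ℝ f x ∧
    ∀ v w : Phase n, canonFormP (fderiv ℝ f x v) (fderiv ℝ f x w) = canonFormP v w

/-- The rescaled Nosé-thermostated free-particle Hamiltonian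
`F₀(σ,w,Σ,W) = |W|²/(2σ²) + Σ²/2 + ln σ`; the argument is `((σ,w),(Σ,W))`. -/
def F0 {n : ℕ} (x : Phase n) : ℝ :=
  (∑ i, x.2.2 i ^ 2) / (2 * x.1.1 ^ 2) + x.2.1 ^ 2 / 2 + Real.log x.1.1

/-- The map `f(u,v,U,V) = (σ,w,Σ,W)`; the argument is `((u,v),(U,V))`. -/
def genMap {n : ℕ} (C : Fin n → ℝ) (x : Phase n) : Phase n :=
  (((1 - x.1.1) * enorm₂ (fun i => C i - x.2.2 i),
    fun i => -x.1.2 i -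
      x.2.1 * (1 - x.1.1) * (C i - x.2.2 i) / (∑ j, (C j - x.2.2 j) ^ 2)),
   (-x.2.1 / enorm₂ (fun i => C i - x.2.2 i),
    fun i => C i - x.2.2 i))

/-- projections as CLMs -/
def puL (n : ℕ) : Phase n →L[ℝ] ℝ :=
  (ContinuousLinearMap.fst ℝ ℝ (Fin n → ℝ)).comp
    (ContinuousLinearMap.fst ℝ (ℝ × (Fin n → ℝ)) (ℝ × (Fin n → ℝ)))

def pvL (n : ℕ) (i : Fin n) : Phase n →L[ℝ] ℝ :=
  (ContinuousLinearMap.proj i).comp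
    ((ContinuousLinearMap.snd ℝ ℝ (Fin n → ℝ)).comp
      (ContinuousLinearMap.fst ℝ (ℝ × (Fin n → ℝ)) (ℝ × (Fin n → ℝ))))

def pUL (n : ℕ) : Phase n →L[ℝ] ℝ :=
  (ContinuousLinearMap.fst ℝ ℝ (Fin n → ℝ)).comp
    (ContinuousLinearMap.snd ℝ (ℝ × (Fin n → ℝ)) (ℝ × (Fin n → ℝ)))

def pVL (n : ℕ) (i : Fin n) : Phase n →L[ℝ] ℝ :=
  (ContinuousLinearMap.proj i).comp
    ((ContinuousLinearMap.snd ℝ ℝ (Fin n → ℝ)).comp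
      (ContinuousLinearMap.snd ℝ (ℝ × (Fin n → ℝ)) (ℝ × (Fin n → ℝ))))

@[simp] lemma puL_apply {n : ℕ} (ξ : Phase n) : puL n ξ = ξ.1.1 := rfl
@[simp] lemma pvL_apply {n : ℕ} (i : Fin n) (ξ : Phase n) : pvL n i ξ = ξ.1.2 i := rfl
@[simp] lemma pUL_apply {n : ℕ} (ξ : Phase n) : pUL n ξ = ξ.2.1 := rfl
@[simp] lemma pVL_apply {n : ℕ} (i : Fin n) (ξ : Phase n) : pVL n i ξ = ξ.2.2 i := rfl

lemma sumsq_pos {n : ℕ} (C V : Fin n → ℝ) (h : V ≠ C) : 0 < ∑ i, (C i - V i) ^ 2 := by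
  rcases Function.ne_iff.1 h with ⟨i, hi⟩
  have hne : C i - V i ≠ 0 := sub_ne_zero.2 (Ne.symm hi)
  refine Finset.sum_pos' (fun j _ => sq_nonneg _) ⟨i, Finset.mem_univ i, ?_⟩
  exact lt_of_le_of_ne (sq_nonneg _) (Ne.symm (pow_ne_zero 2 hne))

lemma genMap_hasFDerivAt {n : ℕ} (C : Fin n → ℝ) (x : Phase n)
    (hQ : (∑ j, (C j - x.2.2 j) ^ 2) ≠ 0) :
    ∃ L : Phase n →L[ℝ] Phase n, HasFDerivAt (genMap C) L x ∧
      ∀ ξ : Phase n, L ξ =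
        ((-(ξ.1.1) * Real.sqrt (∑ j, (C j - x.2.2 j) ^ 2)
            - (1 - x.1.1) * (∑ j, (C j - x.2.2 j) * ξ.2.2 j)
              / Real.sqrt (∑ j, (C j - x.2.2 j) ^ 2),
          fun i => -(ξ.1.2 i)
            - ((ξ.2.1 * (1 - x.1.1) - x.2.1 * ξ.1.1) * (C i - x.2.2 i)
                - x.2.1 * (1 - x.1.1) * ξ.2.2 i) / (∑ j, (C j - x.2.2 j) ^ 2)
            - 2 * x.2.1 * (1 - x.1.1) * (C i - x.2.2 i)
                * (∑ j, (C j - x.2.2 j) * ξ.2.2 j) / (∑ j, (C j - x.2.2 j) ^ 2) ^ 2),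
         (-(ξ.2.1) / Real.sqrt (∑ j, (C j - x.2.2 j) ^ 2)
            - x.2.1 * (∑ j, (C j - x.2.2 j) * ξ.2.2 j)
              / Real.sqrt (∑ j, (C j - x.2.2 j) ^ 2) ^ 3,
          fun i => -(ξ.2.2 i))) := by
  have hQpos : 0 < ∑ j, (C j - x.2.2 j) ^ 2 :=
    lt_of_le_of_ne (Finset.sum_nonneg fun j _ => sq_nonneg _) (Ne.symm hQ)
  have hr0 : Real.sqrt (∑ j, (C j - x.2.2 j) ^ 2) ≠ 0 :=
    ne_of_gt (Real.sqrt_pos.2 hQpos)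
  have hr2 : Real.sqrt (∑ j, (C j - x.2.2 j) ^ 2) ^ 2 = ∑ j, (C j - x.2.2 j) ^ 2 :=
    Real.sq_sqrt hQpos.le
  -- basic projections
  have hu : HasFDerivAt (fun y : Phase n => y.1.1) (puL n) x := (puL n).hasFDerivAt
  have hU : HasFDerivAt (fun y : Phase n => y.2.1) (pUL n) x := (pUL n).hasFDerivAt
  have hv : ∀ i, HasFDerivAt (fun y : Phase n => y.1.2 i) (pvL n i) x :=
    fun i => (pvL n i).hasFDerivAt
  have hVc : ∀ i, HasFDerivAt (fun y : Phase n => C i - y.2.2 i) (-(pVL n i)) x :=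
    fun i => ((pVL n i).hasFDerivAt).const_sub (C i)
  have hsq : ∀ j, HasFDerivAt (fun y : Phase n => (C j - y.2.2 j) ^ 2)
      ((C j - x.2.2 j) • -(pVL n j) + (C j - x.2.2 j) • -(pVL n j)) x := fun j => by
    simpa only [← pow_two] using (hVc j).fun_mul (hVc j)
  have hQd : HasFDerivAt (fun y : Phase n => ∑ j, (C j - y.2.2 j) ^ 2)
      (∑ j, ((C j - x.2.2 j) • -(pVL n j) + (C j - x.2.2 j) • -(pVL n j))) x :=
    HasFDerivAt.fun_sum (fun j _ => hsq j)
  have hrd := hQd.sqrt hQ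
  have hrinv := (hasDerivAt_inv hr0).comp_hasFDerivAt x hrd
  have hQinv := (hasDerivAt_inv hQ).comp_hasFDerivAt x hQd
  have hsg := (hu.const_sub 1).fun_mul hrd
  have hSg := (hU.fun_neg).fun_mul hrinv
  have hw := fun i => ((hv i).fun_neg).fun_sub ((((hU.fun_mul (hu.const_sub 1)).fun_mul (hVc i)).fun_mul hQinv))
  have hwpi := hasFDerivAt_pi.2 hw
  have hWpi := hasFDerivAt_pi.2 hVc
  have key := (hsg.prodMk hwpi).prodMk (hSg.prodMk hWpi)
  refine ⟨_, key, fun ξ => ?_⟩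
  have hS : ∑ j, ((C j - x.2.2 j) • -(pVL n j) + (C j - x.2.2 j) • -(pVL n j)) ξ
      = (-2) * ∑ j, (C j - x.2.2 j) * ξ.2.2 j := by
    rw [Finset.mul_sum]
    exact Finset.sum_congr rfl fun j _ => by
      simp [ContinuousLinearMap.add_apply, ContinuousLinearMap.smul_apply,
        ContinuousLinearMap.neg_apply, smul_eq_mul]; ring
  simp only [ContinuousLinearMap.prod_apply, ContinuousLinearMap.coe_pi,
    ContinuousLinearMap.pi_apply,
    ContinuousLinearMap.add_apply, ContinuousLinearMap.smul_apply, ContinuousLinearMap.neg_apply,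
    ContinuousLinearMap.sub_apply, ContinuousLinearMap.coe_sum', Finset.sum_apply, smul_eq_mul,
    puL_apply, pvL_apply, pUL_apply, pVL_apply, Function.comp_apply, Prod.mk.injEq]
  set Q : ℝ := ∑ j : Fin n, (C j - x.2.2 j) ^ 2 with hQdef
  set r : ℝ := Real.sqrt Q with hrdef
  set S : ℝ := ∑ j : Fin n, (C j - x.2.2 j) * ξ.2.2 j with hSdef
  have hS2 : (∑ j : Fin n, ((C j - x.2.2 j) * -ξ.2.2 j + (C j - x.2.2 j) * -ξ.2.2 j))
      = -2 * S := by
    rw [hSdef, Finset.mul_sum]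
    exact Finset.sum_congr rfl fun j _ => by ring
  rw [hS2]
  refine ⟨⟨?_, ?_⟩, ?_, ?_⟩
  · field_simp
    ring
  · funext i
    simp only [ContinuousLinearMap.pi_apply, ContinuousLinearMap.sub_apply,
      ContinuousLinearMap.add_apply, ContinuousLinearMap.smul_apply,
      ContinuousLinearMap.neg_apply, ContinuousLinearMap.coe_sum', Finset.sum_apply,
      smul_eq_mul, puL_apply, pvL_apply, pUL_apply, pVL_apply]
    rw [hS2]
    field_simp
    ring
  · field_simp
    ring
  · funext i; simp [ContinuousLinearMap.pi_apply]

theorem genMap_symplectic_and_transforms_F0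
    (n : ℕ) (C : Fin n → ℝ) (hC : ∑ i, C i ^ 2 = 1) :
    IsSymplecticOnP (genMap C) {x : Phase n | x.1.1 < 1 ∧ x.2.2 ≠ C} ∧
    ∀ (u : ℝ) (v : Fin n → ℝ) (U : ℝ) (V : Fin n → ℝ), u < 1 → V ≠ C →
      F0 (genMap C ((u, v), (U, V))) =
        (1 / 2) * ((1 - u) ^ 2)⁻¹ + U ^ 2 / (2 * ∑ i, (C i - V i) ^ 2)
          + Real.log (1 - u) + Real.log (enorm₂ (fun i => C i - V i)) := by
  constructor
  · intro x hx
    obtain ⟨hu1, hVC⟩ := hx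
    have hQpos := sumsq_pos C x.2.2 hVC
    have hQ : (∑ j, (C j - x.2.2 j) ^ 2) ≠ 0 := ne_of_gt hQpos
    obtain ⟨L, hL, hLe⟩ := genMap_hasFDerivAt C x hQ
    refine ⟨hL.differentiableAt, fun ξ η => ?_⟩
    rw [hL.fderiv, hLe ξ, hLe η]
    have hr0 : Real.sqrt (∑ j, (C j - x.2.2 j) ^ 2) ≠ 0 := ne_of_gt (Real.sqrt_pos.2 hQpos)
    simp only [canonFormP, pairP]
    set Q : ℝ := ∑ j : Fin n, (C j - x.2.2 j) ^ 2 with hQdef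
    set r : ℝ := Real.sqrt Q with hrdef
    have hr2 : r ^ 2 = Q := Real.sq_sqrt hQpos.le
    set Sx : ℝ := ∑ j : Fin n, (C j - x.2.2 j) * ξ.2.2 j with hSxdef
    set Sy : ℝ := ∑ j : Fin n, (C j - x.2.2 j) * η.2.2 j with hSydef
    have e1 : (∑ i : Fin n, -ξ.2.2 i *
          (-η.1.2 i -
              ((η.2.1 * (1 - x.1.1) - x.2.1 * η.1.1) * (C i - x.2.2 i)
                - x.2.1 * (1 - x.1.1) * η.2.2 i) / Q -
            2 * x.2.1 * (1 - x.1.1) * (C i - x.2.2 i) * Sy / Q ^ 2))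
        = (∑ i : Fin n, ξ.2.2 i * η.1.2 i)
          + ((η.2.1 * (1 - x.1.1) - x.2.1 * η.1.1) / Q) * Sx
          + (-(x.2.1 * (1 - x.1.1) / Q)) * (∑ i : Fin n, ξ.2.2 i * η.2.2 i)
          + (2 * x.2.1 * (1 - x.1.1) * Sy / Q ^ 2) * Sx := by
      rw [hSxdef, Finset.mul_sum, Finset.mul_sum, Finset.mul_sum,
        ← Finset.sum_add_distrib, ← Finset.sum_add_distrib, ← Finset.sum_add_distrib]
      exact Finset.sum_congr rfl fun i _ => by ring
    have e2 : (∑ i : Fin n, -η.2.2 i *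
          (-ξ.1.2 i -
              ((ξ.2.1 * (1 - x.1.1) - x.2.1 * ξ.1.1) * (C i - x.2.2 i)
                - x.2.1 * (1 - x.1.1) * ξ.2.2 i) / Q -
            2 * x.2.1 * (1 - x.1.1) * (C i - x.2.2 i) * Sx / Q ^ 2))
        = (∑ i : Fin n, η.2.2 i * ξ.1.2 i)
          + ((ξ.2.1 * (1 - x.1.1) - x.2.1 * ξ.1.1) / Q) * Sy
          + (-(x.2.1 * (1 - x.1.1) / Q)) * (∑ i : Fin n, ξ.2.2 i * η.2.2 i)
          + (2 * x.2.1 * (1 - x.1.1) * Sx / Q ^ 2) * Sy := by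
      rw [hSydef, Finset.mul_sum, Finset.mul_sum, Finset.mul_sum,
        ← Finset.sum_add_distrib, ← Finset.sum_add_distrib, ← Finset.sum_add_distrib]
      exact Finset.sum_congr rfl fun i _ => by ring
    rw [e1, e2, ← hr2]
    field_simp
    ring
  · intro u v U V huu hVC
    have hQpos := sumsq_pos C V hVC
    have h1u : (0:ℝ) < 1 - u := by linarith
    have hr0 : Real.sqrt (∑ j, (C j - V j) ^ 2) ≠ 0 := ne_of_gt (Real.sqrt_pos.2 hQpos)
    have hr2 : Real.sqrt (∑ j, (C j - V j) ^ 2) ^ 2 = ∑ j, (C j - V j) ^ 2 :=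
      Real.sq_sqrt hQpos.le
    simp only [F0, genMap, enorm₂]
    rw [Real.log_mul (ne_of_gt h1u) hr0]
    set q : ℝ := ∑ j : Fin n, (C j - V j) ^ 2 with hqdef
    set r : ℝ := Real.sqrt q with hrdef
    have hr2' : r ^ 2 = q := Real.sq_sqrt hQpos.le
    rw [← hr2']
    field_simp
    ring

end
end
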